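/- The directed graph G(R,C), whose vertices are the p×q (0,1)-matrices with row sums R and column sums C, with an arc from A to A' whenever A' is obtained from A by a single positive switch, contains no directed cycle. -/

import Mathlib

/-- The switching matrix `C_{i,j,k,l}`. -/
def switchMatrix {p q : ℕ} (i j : Fin p) (k l : Fin q) : Matrix (Fin p) (Fin q) ℤ :=
  Matrix.single i k 1 + Matrix.single j l 1
    - Matrix.single i l 1 - Matrix.single j k 1

/-- `A` is a (0,1)-matrix. -/
def IsBinary {p q : ℕ} (A : Matrix (Fin p) (Fin q) ℤ) : Prop :=
  ∀ r s, A r s = 0 ∨ A r s = 1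

/-- `A'` is obtained from the (0,1)-matrix `A` by a positive switch. -/
def PosSwitch {p q : ℕ} (A A' : Matrix (Fin p) (Fin q) ℤ) : Prop :=
  IsBinary A ∧ ∃ (i j : Fin p) (k l : Fin q), i < j ∧ k < l ∧
    A i k = 0 ∧ A j l = 0 ∧ A i l = 1 ∧ A j k = 1 ∧ A' = A + switchMatrix i j k l

/-- Potential function: `Φ(A) = ∑ A r s · r · s`. -/
def phi {p q : ℕ} (A : Matrix (Fin p) (Fin q) ℤ) : ℤ :=
  ∑ r, ∑ s, A r s * (r : ℤ) * (s : ℤ)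

lemma phi_std {p q : ℕ} (i : Fin p) (k : Fin q) :
    phi (Matrix.single i k (1 : ℤ)) = (i : ℤ) * (k : ℤ) := by
  unfold phi
  rw [Finset.sum_eq_single i, Finset.sum_eq_single k]
  · simp [Matrix.single]
  · intro b _ hb; simp [Matrix.single, hb.symm]
  · simp
  · intro b _ hb
    rw [Finset.sum_eq_zero]
    intro s _; simp [Matrix.single, hb.symm]
  · simp

lemma phi_add {p q : ℕ} (A B : Matrix (Fin p) (Fin q) ℤ) :
    phi (A + B) = phi A + phi B := by
  unfold phi
  simp [Matrix.add_apply, add_mul, Finset.sum_add_distrib]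

lemma phi_sub {p q : ℕ} (A B : Matrix (Fin p) (Fin q) ℤ) :
    phi (A - B) = phi A - phi B := by
  unfold phi
  simp [Matrix.sub_apply, sub_mul, Finset.sum_sub_distrib]

lemma phi_lt {p q : ℕ} {A A' : Matrix (Fin p) (Fin q) ℤ} (h : PosSwitch A A') :
    phi A < phi A' := by
  obtain ⟨-, i, j, k, l, hij, hkl, -, -, -, -, rfl⟩ := h
  rw [phi_add]
  have : 0 < phi (switchMatrix i j k l) := by
    unfold switchMatrix
    rw [phi_sub, phi_sub, phi_add, phi_std, phi_std, phi_std, phi_std]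
    have h1 : (i : ℤ) < (j : ℤ) := by exact_mod_cast hij
    have h2 : (k : ℤ) < (l : ℤ) := by exact_mod_cast hkl
    nlinarith
  linarith

theorem stmt1 {p q : ℕ} (R : Fin p → ℕ) (C : Fin q → ℕ)
    (A : Matrix (Fin p) (Fin q) ℤ) (hA : IsBinary A)
    (hrow : ∀ i, ∑ k, A i k = (R i : ℤ)) (hcol : ∀ k, ∑ i, A i k = (C k : ℤ)) :
    ¬ Relation.TransGen PosSwitch A A := by
  intro h
  have : ∀ B, Relation.TransGen PosSwitch A B → phi A < phi B := by
    intro B hB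
    induction hB with
    | single h => exact phi_lt h
    | tail _ h ih => exact lt_trans ih (phi_lt h)
  exact absurd (this A h) (lt_irrefl _)
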